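/- Let H be a cancellative monoid, let T be a reduced commutative cancellative monoid, and let θ : H → T be a transfer homomorphism. Let a ∈ H and suppose a = ε·u₁⋯u_k with ε ∈ H^× a unit and u₁, …, u_k atoms of H, and let σ be a permutation of {1,…,k}. Then there exist atoms u₁′, …, u_k′ of H such that a = ε·u₁′⋯u_k′ and θ(u′_{σ(i)}) = θ(u_i) for all i ∈ {1,…,k}. -/

import Mathlib

/-- The set of lengths of `a`: all `k` such that `a = ε * u₁ ⋯ u_k` with `ε` a unit
and the `uᵢ` atoms (irreducible elements). -/
def SetOfLengths {H : Type*} [Monoid H] (a : H) : Set ℕ :=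
  { k | ∃ (ε : H) (L : List H), IsUnit ε ∧ L.length = k ∧
      (∀ u ∈ L, Irreducible u) ∧ a = ε * L.prod }

/-- `θ : H →* T` is a weak transfer homomorphism: it is surjective with `θ⁻¹(1) = H^×`,
and every factorization of `θ a` into atoms of `T` lifts, up to permutation, to a
factorization of `a` into atoms of `H`. -/
def IsWeakTransferHom {H T : Type*} [Monoid H] [CommMonoid T] (θ : H →* T) : Prop :=
  Function.Surjective θ ∧ (∀ a : H, θ a = 1 ↔ IsUnit a) ∧
    ∀ (a : H) (v : List T), v ≠ [] → (∀ t ∈ v, Irreducible t) → θ a = v.prod →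
      ∃ u : List H, (∀ x ∈ u, Irreducible x) ∧ a = u.prod ∧ (u.map θ).Perm v

/-- `θ : H →* T` is a transfer homomorphism: it is surjective with `θ⁻¹(1) = H^×`, and
whenever `θ a = s * t`, there is a factorization `a = b * c` with `θ b = s`, `θ c = t`. -/
def IsTransferHom {H T : Type*} [Monoid H] [CommMonoid T] (θ : H →* T) : Prop :=
  Function.Surjective θ ∧ (∀ a : H, θ a = 1 ↔ IsUnit a) ∧
    ∀ (a : H) (s t : T), θ a = s * t → ∃ b c : H, a = b * c ∧ θ b = s ∧ θ c = t

section Aux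
variable {H T : Type*} [CancelMonoid H] [CancelCommMonoid T]
  (hred : ∀ t : T, IsUnit t → t = 1) (θ : H →* T)
  (hθ : Function.Surjective θ ∧ (∀ a : H, θ a = 1 ↔ IsUnit a) ∧
    ∀ (a : H) (s t : T), θ a = s * t → ∃ b c : H, a = b * c ∧ θ b = s ∧ θ c = t)

include hred hθ in
theorem aux_irred_of_map {b : H} (h : Irreducible (θ b)) : Irreducible b := by
  constructor
  · intro hb
    exact h.not_isUnit (((hθ.2.1 b).mpr hb) ▸ isUnit_one)
  · intro x y hxy
    have hh : θ b = θ x * θ y := by rw [hxy, map_mul]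
    rcases h.isUnit_or_isUnit hh with h' | h'
    · exact Or.inl ((hθ.2.1 x).mp (hred _ h'))
    · exact Or.inr ((hθ.2.1 y).mp (hred _ h'))

include hred hθ in
theorem aux_map_irred {b : H} (h : Irreducible b) : Irreducible (θ b) := by
  constructor
  · intro hb
    exact h.not_isUnit ((hθ.2.1 b).mp (hred _ hb))
  · intro s t hst
    obtain ⟨x, y, hxy, hxs, hyt⟩ := hθ.2.2 b s t hst
    rcases h.isUnit_or_isUnit hxy with h' | h'
    · exact Or.inl (hxs ▸ ((hθ.2.1 x).mpr h') ▸ isUnit_one)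
    · exact Or.inr (hyt ▸ ((hθ.2.1 y).mpr h') ▸ isUnit_one)

include hred hθ in
theorem aux_lift : ∀ (v : List T), (∀ t ∈ v, Irreducible t) → ∀ a : H, θ a = v.prod →
    ∃ (η : H) (L : List H), IsUnit η ∧ L.map θ = v ∧ (∀ x ∈ L, Irreducible x) ∧
      a = η * L.prod := by
  intro v
  induction v with
  | nil =>
    intro _ a hav
    exact ⟨a, [], (hθ.2.1 a).mp (by simpa using hav), rfl, by simp, by simp⟩
  | cons t v ih =>
    intro hv a hav
    obtain ⟨b, c, hbc, hbt, hcv⟩ := hθ.2.2 a t v.prod (by simpa using hav)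
    obtain ⟨η, L, hη, hmap, hirr, hc⟩ := ih (fun t ht => hv t (List.mem_cons_of_mem _ ht)) c hcv
    set ηu := hη.unit with hηu
    have hηval : (ηu : H) = η := hη.unit_spec
    have hθb : θ ((↑ηu⁻¹ : H) * b * ↑ηu) = t := by
      have h1 : θ (↑ηu⁻¹ : H) = 1 := (hθ.2.1 _).mpr (ηu⁻¹).isUnit
      have h2 : θ (↑ηu : H) = 1 := (hθ.2.1 _).mpr ηu.isUnit
      rw [map_mul, map_mul, h1, h2, one_mul, mul_one, hbt]
    refine ⟨η, ((↑ηu⁻¹ : H) * b * ↑ηu) :: L, hη, ?_, ?_, ?_⟩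
    · simp [hθb, hmap]
    · intro x hx
      rcases List.mem_cons.mp hx with rfl | hx
      · exact aux_irred_of_map hred θ hθ (hθb ▸ hv t (List.mem_cons_self))
      · exact hirr x hx
    · rw [List.prod_cons, ← mul_assoc]
      have : η * ((↑ηu⁻¹ : H) * b * ↑ηu) = b * η := by
        rw [← hηval, ← mul_assoc, ← mul_assoc, Units.mul_inv, one_mul]
      rw [this, mul_assoc, ← hc, hbc]

theorem aux_ofFn_get_cast {α : Type*} (l : List α) {n : ℕ} (h : l.length = n) :
    List.ofFn (fun i : Fin n => l.get (Fin.cast h.symm i)) = l := by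
  subst h
  simp [List.ofFn_get]

end Aux

/-- If `θ : H → T` is a transfer homomorphism from a cancellative monoid to a reduced
commutative cancellative monoid, `a = ε · u₁ ⋯ u_k` is a factorization of `a` into a
unit `ε` and atoms `uᵢ`, and `σ` is a permutation of `{1, …, k}`, then there is a
factorization `a = ε · u₁' ⋯ u_k'` into atoms with `θ (u'_{σ i}) = θ (u i)` for all `i`. -/
theorem transferHom_permuted_factorization
    {H T : Type*} [CancelMonoid H] [CancelCommMonoid T]
    (hred : ∀ t : T, IsUnit t → t = 1)
    (θ : H →* T) (hθ : IsTransferHom θ)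
    (a : H) (k : ℕ) (ε : H) (hε : IsUnit ε)
    (u : Fin k → H) (hu : ∀ i, Irreducible (u i))
    (ha : a = ε * (List.ofFn u).prod) (σ : Equiv.Perm (Fin k)) :
    ∃ u' : Fin k → H, (∀ i, Irreducible (u' i)) ∧ a = ε * (List.ofFn u').prod ∧
      ∀ i, θ (u' (σ i)) = θ (u i) := by
  obtain ⟨hsurj, hunit, hsplit⟩ := hθ
  have hθ' := And.intro hsurj (And.intro hunit hsplit)
  set v : List T := List.ofFn (fun j => θ (u (σ.symm j))) with hvdef
  have hv : ∀ t ∈ v, Irreducible t := by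
    intro t ht
    rw [hvdef, List.mem_ofFn] at ht
    obtain ⟨j, rfl⟩ := ht
    exact aux_map_irred hred θ hθ' (hu _)
  have hθa : θ a = v.prod := by
    rw [ha, map_mul, (hunit ε).mpr hε, one_mul, map_list_prod, List.map_ofFn, hvdef,
      List.prod_ofFn, List.prod_ofFn]
    exact (Equiv.prod_comp σ.symm (θ ∘ u)).symm
  obtain ⟨η, L, hη, hmap, hirr, haL⟩ := aux_lift hred θ hθ' v hv a hθa
  have hlenv : v.length = k := by simp [hvdef]
  have hlen : L.length = k := by
    have := congrArg List.length hmap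
    simpa [hlenv] using this
  match k, u, hu, ha, σ, v, hvdef, hv, hθa, hmap, hlenv, hlen with
  | 0, u, hu, ha, σ, v, hvdef, hv, hθa, hmap, hlenv, hlen =>
    exact ⟨fun i => i.elim0, fun i => i.elim0, by simpa using ha, fun i => i.elim0⟩
  | (k+1), u, hu, ha, σ, v, hvdef, hv, hθa, hmap, hlenv, hlen =>
    obtain ⟨x, L', rfl⟩ : ∃ x L', L = x :: L' := by
      cases L with
      | nil => simp at hlen
      | cons x L' => exact ⟨x, L', rfl⟩
    set εu := hε.unit with hεu
    have hεval : (εu : H) = ε := hε.unit_spec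
    set δ : H := (↑εu⁻¹ : H) * η with hδ
    have hδu : IsUnit δ := (εu⁻¹).isUnit.mul hη
    have hθδ : θ δ = 1 := (hunit δ).mpr hδu
    set M : List H := (δ * x) :: L' with hM
    have hMlen : M.length = k + 1 := by rw [hM]; simpa using hlen
    set u' : Fin (k+1) → H := fun i => M.get (Fin.cast hMlen.symm i) with hu'
    have hofFn : List.ofFn u' = M := by rw [hu']; exact aux_ofFn_get_cast M hMlen
    have hmapM : M.map θ = v := by
      have hx : θ (δ * x) = θ x := by rw [map_mul, hθδ, one_mul]
      rw [hM, ← hmap]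
      simp [hx]
    have hfun : (fun j => θ (u' j)) = (fun j => θ (u (σ.symm j))) := by
      apply List.ofFn_injective
      rw [show (List.ofFn fun j => θ (u' j)) = (List.ofFn u').map θ from
        (List.map_ofFn (f := u') (g := θ)).symm, hofFn, hmapM, hvdef]
    have hθu' : ∀ j : Fin (k+1), θ (u' j) = θ (u (σ.symm j)) := fun j => congrFun hfun j
    refine ⟨u', ?_, ?_, ?_⟩
    · intro i
      have hmem : u' i ∈ M := by rw [← hofFn]; exact (List.mem_ofFn (f := u') (a := u' i)).mpr ⟨i, rfl⟩
      rcases List.mem_cons.mp hmem with h | h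
      · rw [h]
        have hxirr : Irreducible x := hirr x (List.mem_cons_self)
        exact aux_irred_of_map hred θ hθ' (by
          rw [map_mul, hθδ, one_mul]; exact aux_map_irred hred θ hθ' hxirr)
      · exact hirr _ (List.mem_cons_of_mem _ h)
    · rw [hofFn, hM, List.prod_cons, ← mul_assoc, ← mul_assoc]
      have hεδ : ε * δ = η := by rw [hδ, ← hεval, ← mul_assoc, Units.mul_inv, one_mul]
      rw [hεδ, mul_assoc, ← List.prod_cons, ← haL]
    · intro i
      rw [hθu' (σ i), Equiv.symm_apply_apply]
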